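/- Let f_j(t), g_j(t) (j ∈ ℤ) be holomorphic on {|t| ≤ η} with bounds |f_j|, |g_j| ≤ C ε^{-j}(-j)! for j < 0 and |f_j|, |g_j| ≤ M (R^j/j!)|t|^j for j ≥ 0. Then for each k ≥ 0 the series h_k(t) = ∑_{i+j=k} f_i(t) g_j(t) converges uniformly on {|t| ≤ η̃}, η̃ = min(η, 1/(2Rε)), and satisfies |h_k(t)| ≤ (M² + 2CM·Rη̃ε/(1−Rη̃ε)) · ((2R)^k/k!) |t|^k for |t| ≤ η̃. -/

import Mathlib

open Nat Metric Filter


theorem fact_div_le_aux (n m : ℕ) : ((m ! : ℝ)) / ((n + m)!) ≤ 1 / (n !) := by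
  rw [div_le_div_iff₀ (by positivity) (by positivity), one_mul]
  have h : m ! * n ! ≤ (n + m)! := by
    rw [Nat.add_comm]
    exact Nat.le_of_dvd (Nat.factorial_pos _) (Nat.factorial_mul_factorial_dvd_factorial_add m n)
  exact_mod_cast h

theorem aux_tail (C M R ε η' T : ℝ) (hC : 0 ≤ C) (hM : 0 ≤ M) (hR : 0 ≤ R)
    (hε : 0 ≤ ε) (hT : 0 ≤ T) (hTη : T ≤ η') (n m : ℕ) :
    (C * ε ^ m * (m !)) * (M * R ^ (n + m) / ((n + m)!) * T ^ (n + m)) ≤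
      C * M * R ^ n / (n !) * (R * η' * ε) ^ m * T ^ n := by
  have hη0 : 0 ≤ η' := hT.trans hTη
  have h1 : ((m ! : ℝ)) / ((n + m)!) ≤ 1 / (n !) := fact_div_le_aux n m
  have h2 : T ^ m ≤ η' ^ m := pow_le_pow_left₀ hT hTη m
  calc (C * ε ^ m * (m !)) * (M * R ^ (n + m) / ((n + m)!) * T ^ (n + m))
      = (C * M * R ^ n * T ^ n * (ε ^ m * R ^ m)) * (T ^ m * (((m !) : ℝ) / ((n + m)!))) := by
        rw [pow_add, pow_add]; ring
    _ ≤ (C * M * R ^ n * T ^ n * (ε ^ m * R ^ m)) * (η' ^ m * (1 / (n !))) := by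
        apply mul_le_mul_of_nonneg_left _ (by positivity)
        exact mul_le_mul h2 h1 (by positivity) (by positivity)
    _ = C * M * R ^ n / (n !) * (R * η' * ε) ^ m * T ^ n := by
        rw [mul_pow, mul_pow]; ring

/-- Nonnegative-index coefficients of the product of two order-0 symbols: under the same
hypotheses as for the negative part, for every `k ≥ 0` the series
`h_k = ∑_{i+j=k} f_i g_j` converges uniformly on `{|t| ≤ η̃}`, `η̃ = min(η, 1/(2Rε))`,
and `|h_k(t)| ≤ (M² + 2CM·Rη̃ε/(1−Rη̃ε)) ((2R)^k/k!) |t|^k` for `|t| ≤ η̃`. -/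
theorem stmt_9 (f g : ℤ → ℂ → ℂ) (η C ε M R : ℝ)
    (hη : 0 < η) (hC : 0 < C) (hε : 0 < ε) (hM : 0 < M) (hR : 0 < R)
    (hf : ∀ j : ℤ, DifferentiableOn ℂ (f j) (closedBall 0 η))
    (hg : ∀ j : ℤ, DifferentiableOn ℂ (g j) (closedBall 0 η))
    (hfneg : ∀ j : ℤ, j < 0 → ∀ t ∈ closedBall (0 : ℂ) η,
      ‖f j t‖ ≤ C * ε ^ (-j) * ((-j).toNat !))
    (hgneg : ∀ j : ℤ, j < 0 → ∀ t ∈ closedBall (0 : ℂ) η,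
      ‖g j t‖ ≤ C * ε ^ (-j) * ((-j).toNat !))
    (hfpos : ∀ j : ℤ, 0 ≤ j → ∀ t ∈ closedBall (0 : ℂ) η,
      ‖f j t‖ ≤ M * R ^ j.toNat / (j.toNat !) * ‖t‖ ^ j.toNat)
    (hgpos : ∀ j : ℤ, 0 ≤ j → ∀ t ∈ closedBall (0 : ℂ) η,
      ‖g j t‖ ≤ M * R ^ j.toNat / (j.toNat !) * ‖t‖ ^ j.toNat) :
    ∃ h : ℤ → ℂ → ℂ, ∀ k : ℤ, 0 ≤ k →
      TendstoUniformlyOn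
        (fun (s : Finset ℤ) (t : ℂ) => ∑ i ∈ s, f i t * g (k - i) t)
        (h k) atTop (closedBall 0 (min η (1 / (2 * R * ε)))) ∧
      ∀ t ∈ closedBall (0 : ℂ) (min η (1 / (2 * R * ε))),
        ‖h k t‖ ≤
          (M ^ 2 + 2 * C * M * (R * min η (1 / (2 * R * ε)) * ε) /
              (1 - R * min η (1 / (2 * R * ε)) * ε)) *
            (2 * R) ^ k.toNat / (k.toNat !) * ‖t‖ ^ k.toNat := by
  classical
  set η' := min η (1 / (2 * R * ε)) with hη'def
  have hη'pos : 0 < η' := lt_min hη (by positivity)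
  have hη'le : η' ≤ η := min_le_left _ _
  set q : ℝ := R * η' * ε with hqdef
  have hq0 : 0 < q := by positivity
  have hq1 : q < 1 := by
    have h2 : η' ≤ 1 / (2 * R * ε) := min_le_right _ _
    have hhalf : q ≤ 1 / 2 := by
      calc q = R * ε * η' := by ring
        _ ≤ R * ε * (1 / (2 * R * ε)) := by
            exact mul_le_mul_of_nonneg_left h2 (by positivity)
        _ = 1 / 2 := by field_simp
    linarith
  have h1q : 0 < 1 - q := by linarith
  refine ⟨fun k t => ∑' i : ℤ, f i t * g (k - i) t, fun k hk => ?_⟩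
  set n := k.toNat with hndef
  have hkn : (n : ℤ) = k := Int.toNat_of_nonneg hk
  set a : ℤ → ℝ := fun i =>
    if 0 ≤ i ∧ i ≤ k then M ^ 2 * R ^ n / ((i.toNat)! * ((k - i).toNat)!) else 0 with hadef
  set b₁ : ℤ → ℝ := fun i =>
    if i < 0 then C * M * R ^ n / (n !) * q ^ (-i).toNat else 0 with hb1def
  set b₂ : ℤ → ℝ := fun i =>
    if k < i then C * M * R ^ n / (n !) * q ^ (i - k).toNat else 0 with hb2def
  set u : ℤ → ℝ := fun i => a i + b₁ i + b₂ i with hudef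
  have ha_nonneg : ∀ i, 0 ≤ a i := by
    intro i; rw [hadef]; dsimp only; split <;> positivity
  have hb1_nonneg : ∀ i, 0 ≤ b₁ i := by
    intro i; rw [hb1def]; dsimp only; split <;> positivity
  have hb2_nonneg : ∀ i, 0 ≤ b₂ i := by
    intro i; rw [hb2def]; dsimp only; split <;> positivity
  have hu_nonneg : ∀ i, 0 ≤ u i := by
    intro i; rw [hudef]; dsimp only
    have := ha_nonneg i; have := hb1_nonneg i; have := hb2_nonneg i; linarith
  -- key pointwise bound
  have key : ∀ i : ℤ, ∀ t ∈ closedBall (0 : ℂ) η',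
      ‖f i t * g (k - i) t‖ ≤ u i * ‖t‖ ^ n := by
    intro i t ht
    have htT : ‖t‖ ≤ η' := by
      simpa [Complex.dist_eq] using (mem_closedBall.mp ht)
    have htη : t ∈ closedBall (0 : ℂ) η := closedBall_subset_closedBall hη'le ht
    have hT0 : 0 ≤ ‖t‖ := norm_nonneg t
    rw [norm_mul]
    rcases lt_or_ge i 0 with hi | hi
    · -- i < 0
      set m := (-i).toNat with hmdef
      have hui : u i = C * M * R ^ n / (n !) * q ^ m := by
        rw [hudef, hadef, hb1def, hb2def]; dsimp only
        rw [if_neg (by omega), if_pos hi, if_neg (by omega)]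
        ring
      have hb : ‖f i t‖ ≤ C * ε ^ m * (m !) := by
        have h := hfneg i hi t htη
        rwa [show (-i : ℤ) = (m : ℤ) by omega, zpow_natCast] at h
      have hgb := hgpos (k - i) (by omega) t htη
      rw [show (k - i).toNat = n + m by omega] at hgb
      have hmul := mul_le_mul hb hgb (norm_nonneg _) (by positivity)
      refine hmul.trans ?_
      rw [hui]
      exact aux_tail C M R ε η' (‖t‖) hC.le hM.le hR.le hε.le hT0 htT n m
    · rcases le_or_gt i k with hik | hik
      · -- middle
        have hui : u i = M ^ 2 * R ^ n / ((i.toNat)! * ((k - i).toNat)!) := by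
          rw [hudef, hadef, hb1def, hb2def]; dsimp only
          rw [if_pos ⟨hi, hik⟩, if_neg (by omega), if_neg (by omega)]
          ring
        have hfb := hfpos i hi t htη
        have hgb := hgpos (k - i) (by omega) t htη
        have hmul := mul_le_mul hfb hgb (norm_nonneg _) (by positivity)
        refine hmul.trans (le_of_eq ?_)
        rw [hui]
        have hsum : i.toNat + (k - i).toNat = n := by omega
        have h1 : ((i.toNat)! : ℝ) ≠ 0 := by positivity
        have h2 : (((k - i).toNat)! : ℝ) ≠ 0 := by positivity
        rw [← hsum, pow_add, pow_add]
        field_simp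
      · -- i > k
        set m := (i - k).toNat with hmdef
        have hui : u i = C * M * R ^ n / (n !) * q ^ m := by
          rw [hudef, hadef, hb1def, hb2def]; dsimp only
          rw [if_neg (by omega), if_neg (by omega), if_pos hik]
          ring
        have hb : ‖g (k - i) t‖ ≤ C * ε ^ m * (m !) := by
          have h := hgneg (k - i) (by omega) t htη
          rwa [show (-(k - i) : ℤ) = (m : ℤ) by omega, zpow_natCast] at h
        have hfb := hfpos i (by omega) t htη
        rw [show i.toNat = n + m by omega] at hfb
        have hmul := mul_le_mul hfb hb (norm_nonneg _) (by positivity)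
        refine hmul.trans ?_
        rw [hui]
        calc M * R ^ (n + m) / ((n + m)!) * ‖t‖ ^ (n + m) * (C * ε ^ m * (m !))
            = (C * ε ^ m * (m !)) * (M * R ^ (n + m) / ((n + m)!) * ‖t‖ ^ (n + m)) := by
              ring
          _ ≤ C * M * R ^ n / (n !) * q ^ m * ‖t‖ ^ n :=
              aux_tail C M R ε η' (‖t‖) hC.le hM.le hR.le hε.le hT0 htT n m
  -- summability and sums
  have hazero : ∀ i ∉ Finset.Icc (0 : ℤ) k, a i = 0 := by
    intro i hi
    have h : ¬(0 ≤ i ∧ i ≤ k) := by simpa [Finset.mem_Icc] using hi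
    rw [hadef]; dsimp only; rw [if_neg h]
  have hsa : Summable a := summable_of_ne_finset_zero hazero
  have hta : ∑' i, a i = M ^ 2 * (2 * R) ^ n / (n !) := by
    rw [tsum_eq_sum hazero]
    have hbij : ∑ i ∈ Finset.Icc (0 : ℤ) k, a i
        = ∑ j ∈ Finset.range (n + 1), (M ^ 2 * R ^ n / (n !)) * (n.choose j) := by
      refine Finset.sum_nbij' (fun i => i.toNat) (fun j => (j : ℤ)) ?_ ?_ ?_ ?_ ?_
      · intro i hi; rw [Finset.mem_Icc] at hi; rw [Finset.mem_range]; omega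
      · intro j hj; rw [Finset.mem_range] at hj; rw [Finset.mem_Icc]
        constructor <;> omega
      · intro i hi; rw [Finset.mem_Icc] at hi; omega
      · intro j hj; omega
      · intro i hi
        rw [Finset.mem_Icc] at hi
        rw [hadef]; dsimp only; rw [if_pos ⟨hi.1, hi.2⟩]
        have h1 : (k - i).toNat = n - i.toNat := by omega
        have h2 : i.toNat ≤ n := by omega
        rw [h1]
        have hch : ((n.choose i.toNat : ℝ)) * (i.toNat)! * ((n - i.toNat)!) = (n !) := by
          exact_mod_cast congrArg (Nat.cast : ℕ → ℝ)
            (Nat.choose_mul_factorial_mul_factorial h2)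
        have hf1 : ((i.toNat)! : ℝ) ≠ 0 := by positivity
        have hf2 : (((n - i.toNat)!) : ℝ) ≠ 0 := by positivity
        have hf3 : ((n !) : ℝ) ≠ 0 := by positivity
        field_simp
        linear_combination -hch
    rw [hbij, ← Finset.mul_sum]
    have hs : ∑ j ∈ Finset.range (n + 1), ((n.choose j : ℝ)) = 2 ^ n := by
      exact_mod_cast Nat.sum_range_choose n
    rw [hs, mul_pow]
    ring
  set K := C * M * R ^ n / (n !) with hKdef
  have hK0 : 0 < K := by positivity
  -- b₁ : geometric tail on negative indices
  set e₁ : ℕ → ℤ := fun m => -((m : ℤ) + 1) with he1def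
  have he₁inj : Function.Injective e₁ := by
    intro x y hxy; simp only [he1def] at hxy; omega
  have he₁zero : ∀ x ∉ Set.range e₁, b₁ x = 0 := by
    intro x hx
    rw [hb1def]; dsimp only; rw [if_neg]
    intro hx0
    exact hx ⟨(-x - 1).toNat, by simp only [he1def]; omega⟩
  have hb1comp : ∀ m : ℕ, b₁ (e₁ m) = (K * q) * q ^ m := by
    intro m
    rw [hb1def, he1def]; dsimp only
    rw [if_pos (by omega), show (-(-((m : ℤ) + 1))).toNat = m + 1 by omega, pow_succ]
    ring
  have hsgeom : Summable (fun m : ℕ => (K * q) * q ^ m) :=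
    (summable_geometric_of_lt_one hq0.le hq1).mul_left _
  have hsb₁ : Summable b₁ := by
    refine (he₁inj.summable_iff he₁zero).mp ?_
    exact (summable_congr fun m => hb1comp m).mpr hsgeom
  have htb₁ : ∑' i, b₁ i = K * q * (1 - q)⁻¹ := by
    have hsupp : Function.support b₁ ⊆ Set.range e₁ := by
      intro x hx
      by_contra hxr
      exact hx (he₁zero x hxr)
    rw [← he₁inj.tsum_eq hsupp]
    rw [tsum_congr hb1comp, tsum_mul_left, tsum_geometric_of_lt_one hq0.le hq1]
  -- b₂ : geometric tail on indices > k
  set e₂ : ℕ → ℤ := fun m => k + 1 + (m : ℤ) with he2def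
  have he₂inj : Function.Injective e₂ := by
    intro x y hxy; simp only [he2def] at hxy; omega
  have he₂zero : ∀ x ∉ Set.range e₂, b₂ x = 0 := by
    intro x hx
    rw [hb2def]; dsimp only; rw [if_neg]
    intro hx0
    exact hx ⟨(x - k - 1).toNat, by simp only [he2def]; omega⟩
  have hb2comp : ∀ m : ℕ, b₂ (e₂ m) = (K * q) * q ^ m := by
    intro m
    rw [hb2def, he2def]; dsimp only
    rw [if_pos (by omega), show (k + 1 + (m : ℤ) - k).toNat = m + 1 by omega, pow_succ]
    ring
  have hsb₂ : Summable b₂ := by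
    refine (he₂inj.summable_iff he₂zero).mp ?_
    exact (summable_congr fun m => hb2comp m).mpr hsgeom
  have htb₂ : ∑' i, b₂ i = K * q * (1 - q)⁻¹ := by
    have hsupp : Function.support b₂ ⊆ Set.range e₂ := by
      intro x hx
      by_contra hxr
      exact hx (he₂zero x hxr)
    rw [← he₂inj.tsum_eq hsupp]
    rw [tsum_congr hb2comp, tsum_mul_left, tsum_geometric_of_lt_one hq0.le hq1]
  have hsu : Summable u := by
    rw [hudef]; exact (hsa.add hsb₁).add hsb₂
  have htu : ∑' i, u i ≤ (M ^ 2 + 2 * C * M * q / (1 - q)) * (2 * R) ^ n / (n !) := by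
    have hsplit : ∑' i, u i = (∑' i, a i) + (∑' i, b₁ i) + (∑' i, b₂ i) := by
      rw [hudef, Summable.tsum_add (hsa.add hsb₁) hsb₂, Summable.tsum_add hsa hsb₁]
    rw [hsplit, hta, htb₁, htb₂, hKdef]
    have hRn : R ^ n ≤ (2 * R) ^ n := pow_le_pow_left₀ hR.le (by linarith) n
    calc M ^ 2 * (2 * R) ^ n / (n !) + C * M * R ^ n / (n !) * q * (1 - q)⁻¹
          + C * M * R ^ n / (n !) * q * (1 - q)⁻¹
        = M ^ 2 * (2 * R) ^ n / (n !) + (2 * C * M * q / (1 - q)) * (R ^ n / (n !)) := by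
          ring
      _ ≤ M ^ 2 * (2 * R) ^ n / (n !) + (2 * C * M * q / (1 - q)) * ((2 * R) ^ n / (n !)) := by
          have hX : (0 : ℝ) ≤ 2 * C * M * q / (1 - q) := by positivity
          have : R ^ n / ((n !) : ℝ) ≤ (2 * R) ^ n / (n !) := by
            apply div_le_div_of_nonneg_right hRn (by positivity)
          nlinarith [mul_le_mul_of_nonneg_left this hX]
      _ = (M ^ 2 + 2 * C * M * q / (1 - q)) * (2 * R) ^ n / (n !) := by ring
  constructor
  · -- uniform convergence
    refine tendstoUniformlyOn_tsum (u := fun i => u i * η' ^ n) (hsu.mul_right _) ?_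
    intro i t ht
    calc ‖f i t * g (k - i) t‖ ≤ u i * ‖t‖ ^ n := key i t ht
      _ ≤ u i * η' ^ n := by
          apply mul_le_mul_of_nonneg_left _ (hu_nonneg i)
          exact pow_le_pow_left₀ (norm_nonneg t)
            (by simpa [Complex.dist_eq] using mem_closedBall.mp ht) n
  · -- the bound
    intro t ht
    have hT0 : 0 ≤ ‖t‖ := norm_nonneg t
    have hhs : HasSum (fun i : ℤ => u i * ‖t‖ ^ n)
        ((∑' i, u i) * ‖t‖ ^ n) := hsu.hasSum.mul_right _
    have hb := tsum_of_norm_bounded hhs (fun i => by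
      exact key i t ht)
    refine hb.trans ?_
    calc (∑' i, u i) * ‖t‖ ^ n
        ≤ ((M ^ 2 + 2 * C * M * q / (1 - q)) * (2 * R) ^ n / (n !)) * ‖t‖ ^ n :=
          mul_le_mul_of_nonneg_right htu (by positivity)
      _ = (M ^ 2 + 2 * C * M * q / (1 - q)) * (2 * R) ^ n / (n !) * ‖t‖ ^ n := by
          ring
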